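/- (Conditional Weierstrass theorem) Let (Z,d) be a 𝓖-conditional metric space, let H ⊆ Z be 𝓖-stable and conditionally sequentially compact, and let f : H → L̲⁰_𝓖 be 𝓖-stable and sequentially upper semi-continuous. Then the essential supremum ess sup_{z∈H} f(z) is attained: there exists z* ∈ H with f(z*) = ess sup_{z∈H} f(z). -/

import Mathlib

open MeasureTheory Filter Topology Set
open scoped ENNReal

namespace CondPaper

variable {Ω : Type*}

/-- A countable partition of `Ω` (up to `μ`-null sets) into `G`-measurable sets. -/
def IsCondPartition {_ : MeasurableSpace Ω} (μ : Measure Ω) (G : MeasurableSpace Ω)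
    (A : ℕ → Set Ω) : Prop :=
  (∀ k, MeasurableSet[G] (A k)) ∧
    (∀ i j, i ≠ j → μ (A i ∩ A j) = 0) ∧ μ (⋃ k, A k)ᶜ = 0

/-- A `G`-conditional metric on a nonempty set `X` (Definition 2.1 of the paper). -/
structure CondMetric {_ : MeasurableSpace Ω} (μ : Measure Ω) (G : MeasurableSpace Ω)
    (X : Type*) : Type _ where
  d : X → X → Ω → ℝ
  measurable_d : ∀ x y, Measurable[G] (d x y)
  nonneg : ∀ x y, ∀ᵐ ω ∂μ, 0 ≤ d x y ω
  eq_iff : ∀ x y, (d x y =ᵐ[μ] fun _ => (0 : ℝ)) ↔ x = y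
  symm : ∀ x y, d x y =ᵐ[μ] d y x
  triangle : ∀ x y z, ∀ᵐ ω ∂μ, d x z ω ≤ d x y ω + d y z ω
  concat_spec : ∀ (A : ℕ → Set Ω), IsCondPartition μ G A → ∀ x : ℕ → X,
    ∃! x₀ : X, ∀ k, ∀ᵐ ω ∂μ, ω ∈ A k → d x₀ (x k) ω = 0

namespace CondMetric

variable {m : MeasurableSpace Ω} {μ : Measure Ω} {G : MeasurableSpace Ω} {X Z : Type*}

/-- The concatenation `Σₖ 1_{A k} (x k)` along a partition. -/
noncomputable def concat (D : CondMetric μ G X) (A : ℕ → Set Ω)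
    (hA : IsCondPartition μ G A) (x : ℕ → X) : X :=
  (D.concat_spec A hA x).choose

/-- Almost sure convergence `x n → x₀` in a conditional metric space. -/
def TendstoAE (D : CondMetric μ G X) (x : ℕ → X) (x₀ : X) : Prop :=
  ∀ᵐ ω ∂μ, Tendsto (fun n => D.d x₀ (x n) ω) atTop (nhds (0 : ℝ))

lemma isCondPartition_level {n : Ω → ℕ} (hn : Measurable[G] n) (μ : @Measure Ω m) :
    IsCondPartition μ G fun j => {ω | n ω = j} := by
  refine ⟨fun j => hn (MeasurableSet.singleton j), ?_, ?_⟩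
  · intro i j hij
    have h : {ω | n ω = i} ∩ {ω | n ω = j} = (∅ : Set Ω) := by
      ext ω
      simp only [Set.mem_inter_iff, Set.mem_setOf_eq, Set.mem_empty_iff_false, iff_false]
      rintro ⟨h1, h2⟩
      exact hij (h1 ▸ h2 ▸ rfl)
    simp [h]
  · have h : (⋃ j, {ω | n ω = j}) = (Set.univ : Set Ω) := by
      ext ω; simp
    simp [h]

/-- Given a `G`-measurable index `n : Ω → ℕ`, the element `x_{n}` of the
"measurable subsequence", i.e. the concatenation of `(x j)` along `({n = j})_j`. -/
noncomputable def subseq (D : CondMetric μ G X) (x : ℕ → X) (n : Ω → ℕ)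
    (hn : Measurable[G] n) : X :=
  D.concat (fun j => {ω | n ω = j}) (isCondPartition_level hn μ) x

end CondMetric

variable {m : MeasurableSpace Ω} {μ : Measure Ω} {G : MeasurableSpace Ω} {X Z : Type*}

/-- A strictly increasing sequence `n₁ < n₂ < ⋯` of `G`-measurable `ℕ`-valued random
variables (indexing a measurable subsequence). -/
structure MIdx {_ : MeasurableSpace Ω} (μ : Measure Ω) (G : MeasurableSpace Ω) where
  n : ℕ → Ω → ℕ
  meas : ∀ k, Measurable[G] (n k)
  lt : ∀ k, ∀ᵐ ω ∂μ, n k ω < n (k + 1) ω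

/-- A `G`-stable subset: nonempty and closed under countable concatenations. -/
def StableSet (D : CondMetric μ G X) (H : Set X) : Prop :=
  H.Nonempty ∧ ∀ (A : ℕ → Set Ω) (hA : IsCondPartition μ G A) (x : ℕ → X),
    (∀ k, x k ∈ H) → D.concat A hA x ∈ H

/-- A sequentially closed subset of a conditional metric space. -/
def SeqClosedSet (D : CondMetric μ G X) (H : Set X) : Prop :=
  ∀ (x : ℕ → X) (x₀ : X), (∀ k, x k ∈ H) → D.TendstoAE x x₀ → x₀ ∈ H

/-- Conditional sequential compactness: every sequence has a measurable
subsequence converging a.s. to an element of `K`. -/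
def CondSeqCompact (D : CondMetric μ G X) (K : Set X) : Prop :=
  ∀ z : ℕ → X, (∀ k, z k ∈ K) →
    ∃ (N : MIdx μ G) (z₀ : X), z₀ ∈ K ∧
      D.TendstoAE (fun k => D.subseq z (N.n k) (N.meas k)) z₀

/-- Condition (c1): nonempty control sets. -/
def ControlC1 (Θ : X → Set Z) : Prop := ∀ x, (Θ x).Nonempty

/-- Condition (c2): `𝓕ₜ`-stability of the state-dependent control set. -/
def ControlC2 (DX : CondMetric μ G X) (DZ : CondMetric μ G Z) (Θ : X → Set Z) : Prop :=
  ∀ (A : ℕ → Set Ω) (hA : IsCondPartition μ G A) (x : ℕ → X),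
    Θ (DX.concat A hA x) =
      {w | ∃ z : ℕ → Z, (∀ k, z k ∈ Θ (x k)) ∧ w = DZ.concat A hA z}

/-- Condition (c3): conditional sequential compactness of each control set. -/
def ControlC3 (DZ : CondMetric μ G Z) (Θ : X → Set Z) : Prop :=
  ∀ x, CondSeqCompact DZ (Θ x)

/-- Condition (c4): conditional outer semi-continuity of the control set. -/
def ControlC4 (DX : CondMetric μ G X) (DZ : CondMetric μ G Z) (Θ : X → Set Z) : Prop :=
  ∀ (x : ℕ → X) (x₀ : X), DX.TendstoAE x x₀ → ∀ z : ℕ → Z, (∀ n, z n ∈ Θ (x n)) →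
    ∃ (N : MIdx μ G) (z' : ℕ → Z), (∀ k, z' k ∈ Θ x₀) ∧
      ∀ᵐ ω ∂μ, Tendsto
        (fun k => DZ.d (DZ.subseq z (N.n k) (N.meas k)) (z' k) ω) atTop (nhds (0 : ℝ))

/-- Membership in `L̲⁰(G)`: a `G`-measurable random variable with values in `ℝ ∪ {-∞}`. -/
def InLbar {_ : MeasurableSpace Ω} (μ : Measure Ω) (G : MeasurableSpace Ω)
    (y : Ω → EReal) : Prop :=
  Measurable[G] y ∧ ∀ᵐ ω ∂μ, y ω < ⊤

end CondPaper

namespace CondPaper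


/-- Auxiliary strictly monotone bounded map `EReal → ℝ`. -/
noncomputable def rE : EReal → ℝ := fun x =>
  if x = ⊤ then 8 else if x = ⊥ then 0 else 4 + Real.arctan x.toReal

lemma rE_bot : rE ⊥ = 0 := by simp [rE]

lemma rE_top : rE ⊤ = 8 := by simp [rE]

lemma rE_coe (t : ℝ) : rE t = 4 + Real.arctan t := by
  simp [rE, EReal.coe_ne_top, EReal.coe_ne_bot]

lemma arctan_abs_lt_two (t : ℝ) : -2 < Real.arctan t ∧ Real.arctan t < 2 := by
  have h1 := Real.arctan_lt_pi_div_two t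
  have h2 := Real.neg_pi_div_two_lt_arctan t
  have h3 := Real.pi_le_four
  constructor <;> nlinarith

lemma rE_nonneg (x : EReal) : 0 ≤ rE x := by
  induction x using EReal.rec with
  | bot => simp [rE_bot]
  | coe t => have := arctan_abs_lt_two t; rw [rE_coe]; linarith [this.1]
  | top => simp [rE_top]

lemma rE_le_eight (x : EReal) : rE x ≤ 8 := by
  induction x using EReal.rec with
  | bot => simp [rE_bot]
  | coe t => have := arctan_abs_lt_two t; rw [rE_coe]; linarith [this.2]
  | top => simp [rE_top]

lemma rE_strictMono : StrictMono rE := by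
  intro x y hxy
  induction x using EReal.rec with
  | bot =>
    induction y using EReal.rec with
    | bot => exact absurd hxy (lt_irrefl _)
    | coe t => have := arctan_abs_lt_two t; rw [rE_bot, rE_coe]; linarith [this.1]
    | top => rw [rE_bot, rE_top]; norm_num
  | coe s =>
    induction y using EReal.rec with
    | bot => exact absurd hxy (by simp)
    | coe t =>
      rw [rE_coe, rE_coe]
      have hst : s < t := EReal.coe_lt_coe_iff.mp hxy
      have := Real.arctan_strictMono hst
      linarith
    | top =>
      have := arctan_abs_lt_two s; rw [rE_coe, rE_top]; linarith [this.2]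
  | top => exact absurd hxy (by simp)

lemma rE_measurable : Measurable rE := by
  apply EReal.measurable_of_measurable_real
  have : (fun p : ℝ => rE p) = fun p : ℝ => 4 + Real.arctan p := by
    ext p; exact rE_coe p
  rw [this]
  exact (continuous_const.add Real.continuous_arctan).measurable

/-- Auxiliary strictly monotone bounded map `EReal → ℝ≥0∞`. -/
noncomputable def gE : EReal → ℝ≥0∞ := fun x => ENNReal.ofReal (rE x)

lemma gE_mono : Monotone gE := fun x y h =>
  ENNReal.ofReal_le_ofReal (rE_strictMono.monotone h)

lemma gE_strictMono : StrictMono gE := fun x y h => by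
  rw [gE, gE, ENNReal.ofReal_lt_ofReal_iff_of_nonneg (rE_nonneg x)]
  exact rE_strictMono h

lemma gE_measurable : Measurable gE := ENNReal.measurable_ofReal.comp rE_measurable

lemma gE_le_eight (x : EReal) : gE x ≤ 8 := by
  calc gE x ≤ ENNReal.ofReal 8 := ENNReal.ofReal_le_ofReal (rE_le_eight x)
  _ = 8 := by norm_num


/-- **Conditional Weierstrass theorem.** A `𝓖`-stable, sequentially upper semi-continuous
function `f : H → L̲⁰_𝓖` on a `𝓖`-stable, conditionally sequentially compact subset `H` of a
`𝓖`-conditional metric space attains its essential supremum: there is `z₀ ∈ H` with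
`f z ≤ f z₀` a.s. for all `z ∈ H` (so that `f z₀ = ess sup_{z ∈ H} f z`). -/
theorem conditional_weierstrass {Ω : Type*} {m : MeasurableSpace Ω} {μ : Measure Ω}
    [IsProbabilityMeasure μ] {G : MeasurableSpace Ω} (hG : G ≤ m) {Z : Type*}
    (D : CondMetric μ G Z) (H : Set Z)
    (hHstable : StableSet D H) (hHcomp : CondSeqCompact D H)
    (f : Z → Ω → EReal)
    -- f maps H into L̲⁰_𝓖
    (hfL : ∀ z ∈ H, InLbar μ G (f z))
    -- f is 𝓖-stable on H
    (hfstable : ∀ (A : ℕ → Set Ω) (hA : IsCondPartition μ G A) (z : ℕ → Z),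
      (∀ k, z k ∈ H) → ∀ k, ∀ᵐ ω ∂μ, ω ∈ A k → f (D.concat A hA z) ω = f (z k) ω)
    -- f is sequentially upper semi-continuous on H
    (hfusc : ∀ (z : ℕ → Z) (z₀ : Z), (∀ k, z k ∈ H) → z₀ ∈ H → D.TendstoAE z z₀ →
      ∀ᵐ ω ∂μ, limsup (fun k => f (z k) ω) atTop ≤ f z₀ ω) :
    ∃ z₀ ∈ H, ∀ z ∈ H, ∀ᵐ ω ∂μ, f z ω ≤ f z₀ ω := by

  classical
  have hfG : ∀ z ∈ H, Measurable[G] (f z) := fun z hz => (hfL z hz).1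
  have hfm : ∀ z ∈ H, Measurable[m] (f z) := by
    intro z hz
    exact (hfL z hz).1.mono hG le_rfl
  have hGfm : ∀ z ∈ H, Measurable[m] fun ω => gE (f z ω) :=
    fun z hz => gE_measurable.comp (hfm z hz)
  -- pairwise a.e. maximum within H
  have pairSup : ∀ z w : Z, ∃ u : Z, z ∈ H → w ∈ H →
      u ∈ H ∧ ∀ᵐ ω ∂μ, f u ω = f z ω ⊔ f w ω := by
    intro z w
    by_cases hz : z ∈ H
    · by_cases hw : w ∈ H
      · have hSmeas : MeasurableSet[G] {ω | f w ω ≤ f z ω} :=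
          measurableSet_le (hfG w hw) (hfG z hz)
        set A : ℕ → Set Ω := fun k =>
          if k = 0 then {ω | f w ω ≤ f z ω} else
            if k = 1 then {ω | f w ω ≤ f z ω}ᶜ else ∅ with hA
        have hApart : IsCondPartition μ G A := by
          refine ⟨?_, ?_, ?_⟩
          · intro k
            rcases k with _ | _ | k
            · simpa [A] using hSmeas
            · simpa [A] using hSmeas.compl
            · simpa [A] using (MeasurableSet.empty : MeasurableSet[G] (∅ : Set Ω))
          · intro i j hij
            have h : A i ∩ A j = ∅ := by
              match i, j with
              | 0, 0 => exact absurd rfl hij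
              | 0, 1 => simpa [A] using Set.inter_compl_self {ω | f w ω ≤ f z ω}
              | 0, j+2 => simp [A]
              | 1, 0 => simpa [A] using Set.compl_inter_self {ω | f w ω ≤ f z ω}
              | 1, 1 => exact absurd rfl hij
              | 1, j+2 => simp [A]
              | i+2, j => simp [A]
            rw [h]; simp
          · have h : ⋃ k, A k = Set.univ := by
              apply Set.eq_univ_of_forall
              intro ω
              by_cases hω : ω ∈ {ω | f w ω ≤ f z ω}
              · exact Set.mem_iUnion.mpr ⟨0, by simpa [A] using hω⟩
              · exact Set.mem_iUnion.mpr ⟨1, by simpa [A] using hω⟩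
            rw [h]; simp
        set x : ℕ → Z := fun k => if k = 0 then z else w with hx
        have hxH : ∀ k, x k ∈ H := by
          intro k; by_cases h : k = 0 <;> simp [x, h, hz, hw]
        refine ⟨D.concat A hApart x, fun _ _ => ⟨hHstable.2 A hApart x hxH, ?_⟩⟩
        have h0 := hfstable A hApart x hxH 0
        have h1 := hfstable A hApart x hxH 1
        filter_upwards [h0, h1] with ω hω0 hω1
        by_cases hle : f w ω ≤ f z ω
        · have hmem : ω ∈ A 0 := by simpa [A] using hle
          have heq := hω0 hmem
          rw [heq]
          have hx0 : x 0 = z := rfl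
          rw [hx0]
          exact (sup_eq_left.mpr hle).symm
        · have hmem : ω ∈ A 1 := by simpa [A] using hle
          have heq := hω1 hmem
          rw [heq]
          have hx1 : x 1 = w := rfl
          rw [hx1]
          exact (sup_eq_right.mpr (le_of_not_ge hle)).symm
      · exact ⟨z, fun _ hw' => absurd hw' hw⟩
    · exact ⟨z, fun hz' => absurd hz' hz⟩
  choose sup2 hsup2 using pairSup
  -- a maximizing sequence for the integrals of gE ∘ f
  set Sv : Set ℝ≥0∞ := (fun z => ∫⁻ ω, gE (f z ω) ∂μ) '' H with hSv
  obtain ⟨z1, hz1⟩ := hHstable.1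
  have hSvne : Sv.Nonempty := ⟨_, ⟨z1, hz1, rfl⟩⟩
  obtain ⟨u, hu_mono, hu_tend, hu_mem⟩ := exists_seq_tendsto_sSup hSvne (OrderTop.bddAbove Sv)
  have hsup_u : (⨆ n, u n) = sSup Sv := tendsto_nhds_unique (tendsto_atTop_iSup hu_mono) hu_tend
  choose z0 hz0H hz0eq using hu_mem
  -- the increasing sequence y
  let y : ℕ → Z := fun n => Nat.rec (z0 0) (fun k yk => sup2 yk (z0 (k+1))) n
  have hyH : ∀ n, y n ∈ H := by
    intro n
    induction n with
    | zero => exact hz0H 0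
    | succ k ih => exact (hsup2 (y k) (z0 (k+1)) ih (hz0H (k+1))).1
  have hy_succ_ae : ∀ᵐ ω ∂μ, ∀ n, f (y (n+1)) ω = f (y n) ω ⊔ f (z0 (n+1)) ω :=
    ae_all_iff.mpr fun n => (hsup2 (y n) (z0 (n+1)) (hyH n) (hz0H (n+1))).2
  have hy_mono_ae : ∀ᵐ ω ∂μ, Monotone fun n => f (y n) ω := by
    filter_upwards [hy_succ_ae] with ω h
    exact monotone_nat_of_le_succ fun n => by rw [h n]; exact le_sup_left
  have hy_ge_ae : ∀ᵐ ω ∂μ, ∀ n, f (z0 n) ω ≤ f (y n) ω := by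
    filter_upwards [hy_succ_ae] with ω h
    intro n
    cases n with
    | zero => exact le_rfl
    | succ k => rw [h k]; exact le_sup_right
  have hInt_le : ∀ z ∈ H, ∫⁻ ω, gE (f z ω) ∂μ ≤ sSup Sv := fun z hz => le_sSup ⟨z, hz, rfl⟩
  have hIy_ge : ∀ n, u n ≤ ∫⁻ ω, gE (f (y n) ω) ∂μ := by
    intro n
    rw [← hz0eq n]
    apply lintegral_mono_ae
    filter_upwards [hy_ge_ae] with ω h
    exact gE_mono (h n)
  have hIy_sup : (⨆ n, ∫⁻ ω, gE (f (y n) ω) ∂μ) = sSup Sv := by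
    apply le_antisymm
    · exact iSup_le fun n => hInt_le _ (hyH n)
    · rw [← hsup_u]; exact iSup_mono hIy_ge
  have hLg_meas : Measurable[m] fun ω => ⨆ n, gE (f (y n) ω) :=
    Measurable.iSup fun n => hGfm _ (hyH n)
  have hmono1 : ∀ᵐ ω ∂μ, Monotone fun n => gE (f (y n) ω) := by
    filter_upwards [hy_mono_ae] with ω h a b hab
    exact gE_mono (h hab)
  have hLg_int : ∫⁻ ω, (⨆ n, gE (f (y n) ω)) ∂μ = sSup Sv := by
    have hlint : ∫⁻ ω, (⨆ n, gE (f (y n) ω)) ∂μ = ⨆ n, ∫⁻ ω, gE (f (y n) ω) ∂μ :=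
      lintegral_iSup' (fun n => (hGfm _ (hyH n)).aemeasurable) hmono1
    rw [hlint, hIy_sup]
  have hSv_le : sSup Sv ≤ 8 := by
    apply sSup_le
    rintro s ⟨z, hz, rfl⟩
    calc ∫⁻ ω, gE (f z ω) ∂μ ≤ ∫⁻ _, (8 : ℝ≥0∞) ∂μ := lintegral_mono fun ω => gE_le_eight _
    _ = 8 := by simp
  have hLg_fin : ∫⁻ ω, (⨆ n, gE (f (y n) ω)) ∂μ ≠ ⊤ := by
    rw [hLg_int]
    exact ne_top_of_le_ne_top (by norm_num) hSv_le
  -- domination: every f z is a.e. below the countable sup along y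
  have hdom : ∀ z ∈ H, ∀ᵐ ω ∂μ, f z ω ≤ ⨆ n, f (y n) ω := by
    intro z hz
    have hwH : ∀ n, sup2 z (y n) ∈ H := fun n => (hsup2 z (y n) hz (hyH n)).1
    have hw_ae : ∀ᵐ ω ∂μ, ∀ n, f (sup2 z (y n)) ω = f z ω ⊔ f (y n) ω :=
      ae_all_iff.mpr fun n => (hsup2 z (y n) hz (hyH n)).2
    have hsup_split : ∀ ω, gE (f z ω) ⊔ (⨆ n, gE (f (y n) ω))
        = ⨆ n, (gE (f z ω) ⊔ gE (f (y n) ω)) := by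
      intro ω
      apply le_antisymm
      · refine sup_le
          (le_trans le_sup_left (le_iSup (fun n => gE (f z ω) ⊔ gE (f (y n) ω)) 0)) ?_
        exact iSup_mono fun n => le_sup_right
      · exact iSup_le fun n => sup_le le_sup_left
          (le_sup_of_le_right (le_iSup (fun n => gE (f (y n) ω)) n))
    have hmono2 : ∀ᵐ ω ∂μ, Monotone fun n => gE (f (sup2 z (y n)) ω) := by
      filter_upwards [hw_ae, hy_mono_ae] with ω h hmono a b hab
      show gE (f (sup2 z (y a)) ω) ≤ gE (f (sup2 z (y b)) ω)
      rw [h a, h b]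
      exact gE_mono (sup_le_sup_left (hmono hab) _)
    have hsupGf : ∫⁻ ω, (gE (f z ω) ⊔ ⨆ n, gE (f (y n) ω)) ∂μ ≤ sSup Sv := by
      have heq : ∫⁻ ω, (gE (f z ω) ⊔ ⨆ n, gE (f (y n) ω)) ∂μ
          = ∫⁻ ω, (⨆ n, gE (f (sup2 z (y n)) ω)) ∂μ := by
        apply lintegral_congr_ae
        filter_upwards [hw_ae] with ω h
        rw [hsup_split ω]
        congr 1
        funext n
        rw [h n]
        exact (gE_mono.map_sup _ _).symm
      have hlint2 : ∫⁻ ω, (⨆ n, gE (f (sup2 z (y n)) ω)) ∂μ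
          = ⨆ n, ∫⁻ ω, gE (f (sup2 z (y n)) ω) ∂μ :=
        lintegral_iSup' (fun n => (hGfm _ (hwH n)).aemeasurable) hmono2
      rw [heq, hlint2]
      exact iSup_le fun n => hInt_le _ (hwH n)
    have hint_le : ∫⁻ ω, (gE (f z ω) ⊔ ⨆ n, gE (f (y n) ω)) ∂μ
        ≤ ∫⁻ ω, (⨆ n, gE (f (y n) ω)) ∂μ := by
      rw [hLg_int]; exact hsupGf
    have hsub : ∫⁻ ω, ((gE (f z ω) ⊔ ⨆ n, gE (f (y n) ω)) - ⨆ n, gE (f (y n) ω)) ∂μ = 0 := by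
      rw [@lintegral_sub Ω m μ _ _ hLg_meas hLg_fin (Filter.Eventually.of_forall fun ω => le_sup_right)]
      exact tsub_eq_zero_of_le hint_le
    have hzero : ∀ᵐ ω ∂μ,
        ((gE (f z ω) ⊔ ⨆ n, gE (f (y n) ω)) - ⨆ n, gE (f (y n) ω)) = 0 := by
      have h0 := (lintegral_eq_zero_iff
        (((hGfm z hz).sup hLg_meas).sub hLg_meas)).mp hsub
      filter_upwards [h0] with ω h
      simpa using h
    have hGle : ∀ᵐ ω ∂μ, gE (f z ω) ≤ ⨆ n, gE (f (y n) ω) := by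
      filter_upwards [hzero] with ω h
      exact le_trans le_sup_left (tsub_eq_zero_iff_le.mp h)
    filter_upwards [hGle] with ω h
    by_contra hcon
    have hlt : (⨆ n, f (y n) ω) < f z ω := not_le.mp hcon
    have hle2 : (⨆ n, gE (f (y n) ω)) ≤ gE (⨆ n, f (y n) ω) :=
      iSup_le fun n => gE_mono (le_iSup (fun n => f (y n) ω) n)
    exact absurd (h.trans hle2) (not_le.mpr (gE_strictMono hlt))
  -- compactness: measurable subsequence of y converging to some z₀ ∈ H
  obtain ⟨N, z₀, hz₀H, htend⟩ := hHcomp y hyH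
  have hwkH : ∀ k, D.subseq y (N.n k) (N.meas k) ∈ H :=
    fun k => hHstable.2 _ _ y (fun _ => hyH _)
  have husc := hfusc (fun k => D.subseq y (N.n k) (N.meas k)) z₀ hwkH hz₀H htend
  have hval : ∀ᵐ ω ∂μ, ∀ k, f (D.subseq y (N.n k) (N.meas k)) ω = f (y (N.n k ω)) ω := by
    rw [ae_all_iff]
    intro k
    have h := hfstable (fun j => {ω | N.n k ω = j})
      (CondMetric.isCondPartition_level (N.meas k) μ) y hyH
    filter_upwards [ae_all_iff.mpr h] with ω hω
    exact hω (N.n k ω) rfl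
  have hnk : ∀ᵐ ω ∂μ, ∀ k, k ≤ N.n k ω := by
    filter_upwards [ae_all_iff.mpr N.lt] with ω h k
    induction k with
    | zero => exact Nat.zero_le _
    | succ j ih => exact Nat.lt_of_le_of_lt ih (h j)
  have hLle : ∀ᵐ ω ∂μ, (⨆ n, f (y n) ω) ≤ f z₀ ω := by
    filter_upwards [husc, hval, hnk, hy_mono_ae] with ω h1 h2 h3 h4
    refine le_trans (iSup_le fun n => ?_) h1
    refine Filter.le_limsup_of_frequently_le ?_ (by isBoundedDefault)
    apply Filter.Eventually.frequently
    rw [Filter.eventually_atTop]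
    refine ⟨n, fun k hk => ?_⟩
    rw [h2 k]
    exact le_trans (h4 hk) (h4 (h3 k))
  refine ⟨z₀, hz₀H, fun z hz => ?_⟩
  filter_upwards [hdom z hz, hLle] with ω ha hb
  exact ha.trans hb


end CondPaper
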